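/- Let s ≥ 2 be an integer, define q_0 = 0, q_{n+1} = (q_n^s + s - 1)/s, and for k < n set p_{k,n} = ∏_{j=k}^{n-1} q_j^{s-1}. Then log p_{k,n} / (2 log(k/n)) → 1 as k → ∞, uniformly over n > k; equivalently, log p_{k,n} ∼ 2 log(k/n). -/

import Mathlib

open Filter Finset Real Topology

private lemma aux_pow_ub (m : ℕ) {x : ℝ} (hx0 : 0 ≤ x) (hx1 : x ≤ 1) :
    (1 - x) ^ m ≤ 1 - m * x + (m.choose 2) * x ^ 2 := by
  induction m with
  | zero => norm_num
  | succ m ih =>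
    have ha : ((m + 1).choose 2 : ℝ) = m + m.choose 2 := by
      rw [Nat.choose_succ_succ]; push_cast [Nat.choose_one_right]; ring
    have h1 : (0:ℝ) ≤ 1 - x := by linarith
    have h3 := mul_le_mul_of_nonneg_left ih h1
    have h2 : (1 - x) ^ (m + 1) = (1 - x) * (1 - x) ^ m := by ring
    rw [h2, ha]
    push_cast
    nlinarith [mul_nonneg (Nat.cast_nonneg (m.choose 2) : (0:ℝ) ≤ m.choose 2)
      (pow_nonneg hx0 3)]

private lemma aux_pow_lb (m : ℕ) {x : ℝ} (hx0 : 0 ≤ x) (hx1 : x ≤ 1) :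
    1 - m * x + (m.choose 2) * x ^ 2 - (m.choose 3) * x ^ 3 ≤ (1 - x) ^ m := by
  induction m with
  | zero => norm_num
  | succ m ih =>
    have ha : ((m + 1).choose 2 : ℝ) = m + m.choose 2 := by
      rw [Nat.choose_succ_succ]; push_cast [Nat.choose_one_right]; ring
    have hb : ((m + 1).choose 3 : ℝ) = m.choose 2 + m.choose 3 := by
      rw [Nat.choose_succ_succ]; push_cast; ring
    have h1 : (0:ℝ) ≤ 1 - x := by linarith
    have h3 := mul_le_mul_of_nonneg_left ih h1
    have h2 : (1 - x) ^ (m + 1) = (1 - x) * (1 - x) ^ m := by ring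
    rw [h2, ha, hb]
    push_cast
    nlinarith [mul_nonneg (Nat.cast_nonneg (m.choose 3) : (0:ℝ) ≤ m.choose 3)
      (pow_nonneg hx0 4)]

private lemma aux_basic (s : ℕ) (hs : 2 ≤ s) (e : ℕ → ℝ)
    (he0 : e 0 = 1) (he : ∀ n, e (n + 1) = (1 - (1 - e n) ^ s) / s) :
    ∀ n, 0 < e n ∧ e n ≤ 1 := by
  have hs0 : (0:ℝ) < s := by positivity
  intro n
  induction n with
  | zero => rw [he0]; norm_num
  | succ n ih =>
    obtain ⟨h1, h2⟩ := ih
    have hq0 : 0 ≤ 1 - e n := by linarith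
    have hq1 : 1 - e n < 1 := by linarith
    have hpow : (1 - e n) ^ s < 1 := by
      calc (1 - e n) ^ s ≤ (1 - e n) ^ 1 :=
            pow_le_pow_of_le_one hq0 hq1.le (by omega)
        _ < 1 := by simpa using hq1
    have hpow0 : 0 ≤ (1 - e n) ^ s := pow_nonneg hq0 s
    constructor
    · rw [he n]; exact div_pos (by linarith) hs0
    · rw [he n, div_le_one hs0]
      have : (1:ℝ) ≤ s := by exact_mod_cast (by omega : 1 ≤ s)
      linarith

private lemma aux_ub (s : ℕ) (hs : 2 ≤ s) (e : ℕ → ℝ)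
    (he0 : e 0 = 1) (he : ∀ n, e (n + 1) = (1 - (1 - e n) ^ s) / s) :
    ∀ n, e (n + 1) ≤ 1 / s := by
  intro n
  have hs0 : (0:ℝ) < s := by positivity
  have h := (aux_basic s hs e he0 he n)
  have hpow0 : 0 ≤ (1 - e n) ^ s := pow_nonneg (by linarith [h.2]) s
  rw [he n, div_le_div_iff₀ hs0 hs0]
  nlinarith

set_option maxHeartbeats 1600000 in
private lemma key_tendsto (s : ℕ) (hs : 2 ≤ s) (e : ℕ → ℝ)
    (he0 : e 0 = 1) (he : ∀ n, e (n + 1) = (1 - (1 - e n) ^ s) / s) :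
    Tendsto (fun n : ℕ => (n : ℝ) * e n) atTop (𝓝 (2 / ((s:ℝ) - 1))) := by
  have hs0 : (0:ℝ) < s := by positivity
  have hs1 : (2:ℝ) ≤ s := by exact_mod_cast hs
  have hbasic := aux_basic s hs e he0 he
  have hub := aux_ub s hs e he0 he
  set B : ℝ := (s.choose 2 : ℝ) / s with hBdef
  set C : ℝ := (s.choose 3 : ℝ) / s with hCdef
  have hB : B = ((s:ℝ) - 1) / 2 := by
    rw [hBdef, Nat.cast_choose_two]; field_simp
  have hBpos : 0 < B := by rw [hB]; linarith
  have hC0 : 0 ≤ C := by rw [hCdef]; positivity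
  -- B' = B - C/s > 0
  have hch : s.choose 3 * 3 = s.choose 2 * (s - 2) := Nat.choose_succ_right_eq s 2
  have hch2 : 1 ≤ s.choose 2 := (Nat.choose_pos hs)
  have hchlt : s.choose 3 < s * s.choose 2 := by
    have h2 : s - 2 < 3 * s := by omega
    nlinarith [hch, hch2]
  have hB' : 0 < B - C * (1 / s) := by
    have hcast : (s.choose 3:ℝ) < s * s.choose 2 := by exact_mod_cast hchlt
    have heq : B - C * (1 / s) = ((s:ℝ) * s.choose 2 - s.choose 3) / s ^ 2 := by
      rw [hBdef, hCdef]; field_simp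
    rw [heq]
    exact div_pos (by linarith) (by positivity)
  -- one-step bounds
  have hlow : ∀ n, e n - B * (e n) ^ 2 ≤ e (n + 1) := by
    intro n
    obtain ⟨h1, h2⟩ := hbasic n
    have h := aux_pow_ub s (le_of_lt h1) h2
    rw [he n, le_div_iff₀ hs0, hBdef]
    field_simp
    nlinarith
  have hup : ∀ n, e (n + 1) ≤ e n - B * (e n) ^ 2 + C * (e n) ^ 3 := by
    intro n
    obtain ⟨h1, h2⟩ := hbasic n
    have h := aux_pow_lb s (le_of_lt h1) h2
    rw [he n, div_le_iff₀ hs0, hBdef, hCdef]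
    field_simp
    nlinarith
  have hmono : ∀ n, e (n + 1) ≤ e n := by
    intro n
    obtain ⟨h1, h2⟩ := hbasic n
    have hbern : 1 - (s:ℝ) * e n ≤ (1 - e n) ^ s := by
      have := one_add_mul_le_pow (show (-2:ℝ) ≤ -(e n) by linarith) s
      simpa [sub_eq_add_neg, mul_neg, mul_comm] using this
    rw [he n, div_le_iff₀ hs0]
    nlinarith
  -- e tends to 0
  have htend0 : Tendsto e atTop (𝓝 0) := by
    have hanti : Antitone e := antitone_nat_of_succ_le hmono
    have hsmall : ∀ η : ℝ, 0 < η → ∃ N, e N < η := by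
      intro η hη
      by_contra hcon
      push_neg at hcon
      have hstep : ∀ n, e (n + 1) ≤ e 1 - n * ((B - C * (1 / s)) * η ^ 2) := by
        intro n
        induction n with
        | zero => simp
        | succ n ih =>
          have hy : 0 < e (n + 1) := (hbasic (n + 1)).1
          have hyu : e (n + 1) ≤ 1 / s := hub n
          have h3 := hup (n + 1)
          have h2 := hcon (n + 1)
          have hcy : C * e (n + 1) ^ 3 ≤ C * (1 / s) * e (n + 1) ^ 2 := by
            nlinarith [mul_nonneg (mul_nonneg hC0 (sq_nonneg (e (n + 1))))
              (by linarith : (0:ℝ) ≤ 1 / s - e (n + 1))]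
          have hyy : (B - C * (1 / s)) * η ^ 2 ≤ (B - C * (1 / s)) * e (n + 1) ^ 2 :=
            mul_le_mul_of_nonneg_left (pow_le_pow_left₀ hη.le h2 2) hB'.le
          push_cast
          nlinarith
      obtain ⟨n, hn⟩ := exists_nat_gt (e 1 / ((B - C * (1 / s)) * η ^ 2))
      have hBη : 0 < (B - C * (1 / s)) * η ^ 2 := mul_pos hB' (by positivity)
      rw [div_lt_iff₀ hBη] at hn
      have h1 := hstep n
      have h2 := hcon (n + 1)
      linarith
    rw [tendsto_order]
    constructor
    · intro a ha
      exact Eventually.of_forall fun n => lt_of_lt_of_le ha (hbasic n).1.le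
    · intro a ha
      obtain ⟨N, hN⟩ := hsmall a ha
      filter_upwards [eventually_ge_atTop N] with n hn
      exact lt_of_le_of_lt (hanti hn) hN
  -- difference sequence
  have hd_eq : ∀ n, (e n - e (n + 1)) / (e n * e (n + 1)) = 1 / e (n + 1) - 1 / e n := by
    intro n
    have h1 := (hbasic n).1
    have h2 := (hbasic (n + 1)).1
    rw [div_sub_div _ _ h2.ne' h1.ne', one_mul, mul_one, mul_comm]
  have hΔub : ∀ n, (e (n + 1) - e (n + 2)) / (e (n + 1) * e (n + 2)) ≤ B / (1 - B * e (n + 1)) := by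
    intro n
    have hy : 0 < e (n + 1) := (hbasic (n + 1)).1
    have hy' : 0 < e (n + 2) := (hbasic (n + 2)).1
    have hyu : e (n + 1) ≤ 1 / s := hub n
    have hBs : B * (1 / s) < 1 := by
      rw [hB, div_mul_div_comm, div_lt_one (by positivity)]
      linarith
    have hmul : B * e (n + 1) ≤ B * (1 / s) := mul_le_mul_of_nonneg_left hyu hBpos.le
    have hden : 0 < 1 - B * e (n + 1) := by linarith
    have h1 := hlow (n + 1)
    have h2 := hmono (n + 1)
    rw [div_le_div_iff₀ (mul_pos hy hy') hden]
    have hA : (e (n + 1) - e (n + 2)) * (1 - B * e (n + 1)) ≤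
        B * e (n + 1) ^ 2 * (1 - B * e (n + 1)) :=
      mul_le_mul_of_nonneg_right (by linarith) hden.le
    have hBr : (B * e (n + 1)) * (e (n + 1) - B * e (n + 1) ^ 2) ≤
        (B * e (n + 1)) * e (n + 2) :=
      mul_le_mul_of_nonneg_left h1 (mul_pos hBpos hy).le
    linarith
  have hΔlb : ∀ n, B - C * e (n + 1) ≤ (e (n + 1) - e (n + 2)) / (e (n + 1) * e (n + 2)) := by
    intro n
    have hy : 0 < e (n + 1) := (hbasic (n + 1)).1
    have hy' : 0 < e (n + 2) := (hbasic (n + 2)).1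
    have h2 := hmono (n + 1)
    rcases le_or_gt (B - C * e (n + 1)) 0 with hcase | hcase
    · have h0 : 0 ≤ (e (n + 1) - e (n + 2)) / (e (n + 1) * e (n + 2)) :=
        div_nonneg (by linarith) (mul_pos hy hy').le
      linarith
    · have h3 := hup (n + 1)
      rw [le_div_iff₀ (mul_pos hy hy')]
      have hyy : e (n + 1) * e (n + 2) ≤ e (n + 1) ^ 2 := by
        have := mul_le_mul_of_nonneg_left h2 hy.le
        nlinarith
      have hA : (B - C * e (n + 1)) * (e (n + 1) * e (n + 2)) ≤
          (B - C * e (n + 1)) * e (n + 1) ^ 2 :=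
        mul_le_mul_of_nonneg_left hyy hcase.le
      nlinarith
  have hΔtend : Tendsto (fun n : ℕ => (e n - e (n + 1)) / (e n * e (n + 1))) atTop (𝓝 B) := by
    have hg1 : Tendsto (fun n => B - C * e n) atTop (𝓝 B) := by
      have h := tendsto_const_nhds (x := B) (f := atTop (α := ℕ))
      have := h.sub ((tendsto_const_nhds (x := C) (f := atTop (α := ℕ))).mul htend0)
      simpa using this
    have hg2 : Tendsto (fun n => B / (1 - B * e n)) atTop (𝓝 B) := by
      have hden : Tendsto (fun n => 1 - B * e n) atTop (𝓝 1) := by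
        have h := tendsto_const_nhds (x := (1:ℝ)) (f := atTop (α := ℕ))
        have := h.sub ((tendsto_const_nhds (x := B) (f := atTop (α := ℕ))).mul htend0)
        simpa using this
      have := (tendsto_const_nhds (x := B) (f := atTop (α := ℕ))).div hden one_ne_zero
      rw [div_one] at this
      exact this
    apply tendsto_of_tendsto_of_tendsto_of_le_of_le' hg1 hg2
    · filter_upwards [eventually_ge_atTop 1] with n hn
      obtain ⟨m, rfl⟩ := Nat.exists_eq_add_of_le hn
      have hcomm : 1 + m = m + 1 := by omega
      rw [hcomm]
      exact hΔlb m
    · filter_upwards [eventually_ge_atTop 1] with n hn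
      obtain ⟨m, rfl⟩ := Nat.exists_eq_add_of_le hn
      have hcomm : 1 + m = m + 1 := by omega
      rw [hcomm]
      exact hΔub m
  -- partial sums and Cesaro
  have hsum : ∀ n, 1 / e n = 1 + ∑ i ∈ range n, (e i - e (i + 1)) / (e i * e (i + 1)) := by
    intro n
    induction n with
    | zero => simp [he0]
    | succ n ih =>
      rw [sum_range_succ]
      have h := hd_eq n
      linarith
  have hces := hΔtend.cesaro
  have htendinv : Tendsto (fun n : ℕ => (n:ℝ)⁻¹ * (1 / e n)) atTop (𝓝 B) := by
    have h0 : Tendsto (fun n : ℕ => (n:ℝ)⁻¹) atTop (𝓝 0) :=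
      tendsto_inv_atTop_zero.comp tendsto_natCast_atTop_atTop
    have h := h0.add hces
    rw [zero_add] at h
    apply h.congr
    intro n
    rw [hsum n]
    ring
  have hfin := htendinv.inv₀ (by positivity : B ≠ 0)
  have hBinv : B⁻¹ = 2 / ((s:ℝ) - 1) := by rw [hB, inv_div]
  rw [← hBinv]
  apply hfin.congr'
  filter_upwards [eventually_ge_atTop 1] with n hn
  have hn0 : (0:ℝ) < n := by exact_mod_cast hn
  have he0' : e n ≠ 0 := (hbasic n).1.ne'
  field_simp

set_option maxHeartbeats 1600000 in
theorem stmt_13 (s : ℕ) (hs : 2 ≤ s) (q : ℕ → ℝ)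
    (hq0 : q 0 = 0) (hqrec : ∀ n, q (n+1) = (q n ^ s + s - 1) / s) :
    ∀ ε > (0:ℝ), ∃ K : ℕ, ∀ k ≥ K, ∀ n > k,
      |Real.log (∏ j ∈ Finset.Ico k n, q j ^ (s - 1)) /
        (2 * Real.log ((k : ℝ) / n)) - 1| < ε := by
  intro ε hε
  have hs0 : (0:ℝ) < s := by positivity
  have hs1 : (2:ℝ) ≤ s := by exact_mod_cast hs
  set e : ℕ → ℝ := fun n => 1 - q n with he_def
  have hq_eq : ∀ j, q j = 1 - e j := fun j => by simp [he_def]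
  have he0 : e 0 = 1 := by simp [he_def, hq0]
  have he : ∀ n, e (n + 1) = (1 - (1 - e n) ^ s) / s := by
    intro n
    simp only [he_def]
    rw [hqrec n]
    field_simp
    ring
  have hbasic := aux_basic s hs e he0 he
  have hkey := key_tendsto s hs e he0 he
  obtain ⟨c, hc_def⟩ : ∃ c : ℝ, c = 2 / ((s:ℝ) - 1) := ⟨_, rfl⟩
  rw [← hc_def] at hkey
  have hc0 : 0 < c := by
    rw [hc_def]
    exact div_pos (by norm_num) (by linarith)
  have hc2 : c ≤ 2 := by
    rw [hc_def, div_le_iff₀ (by linarith)]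
    nlinarith
  obtain ⟨δ, hδ_def⟩ : ∃ δ : ℝ, δ = min (ε / 12) (1 / 4) := ⟨_, rfl⟩
  have hδ0 : 0 < δ := hδ_def ▸ lt_min (by linarith) (by norm_num)
  have hδ4 : δ ≤ 1 / 4 := hδ_def ▸ min_le_right _ _
  have hδε : δ ≤ ε / 12 := hδ_def ▸ min_le_left _ _
  rw [Metric.tendsto_atTop] at hkey
  obtain ⟨K₁, hK₁⟩ := hkey (δ * c) (by positivity)
  obtain ⟨K₂, hK₂⟩ := exists_nat_gt (3 / δ)
  refine ⟨max K₁ K₂ + 1, ?_⟩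
  intro k hk n hn
  have hkK₁ : K₁ ≤ k := le_trans (le_trans (le_max_left _ _) (Nat.le_succ _)) hk
  have hkK₂ : K₂ + 1 ≤ k := by
    have := le_max_right K₁ K₂
    omega
  have hk1 : 1 ≤ k := by omega
  -- per-index facts
  have hj : ∀ j, k ≤ j → (1 - δ) * c / j ≤ e j ∧ e j ≤ (1 + δ) * c / j ∧
      3 ≤ δ * j ∧ e j ≤ δ ∧ 1 - δ ≤ q j ∧ 0 < q j := by
    intro j hjk
    have hj1 : 1 ≤ j := le_trans hk1 hjk
    have hjR : (0:ℝ) < j := by exact_mod_cast hj1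
    have hdist := hK₁ j (le_trans hkK₁ hjk)
    rw [Real.dist_eq, abs_lt] at hdist
    obtain ⟨hd1, hd2⟩ := hdist
    have hjK₂ : (3:ℝ) / δ < j := by
      have : ((K₂:ℝ) + 1) ≤ j := by exact_mod_cast le_trans hkK₂ hjk
      linarith
    have h3δ : 3 ≤ δ * j := by
      rw [div_lt_iff₀ hδ0] at hjK₂
      linarith
    have hub : e j ≤ (1 + δ) * c / j := by
      rw [le_div_iff₀ hjR]
      nlinarith
    have hlb : (1 - δ) * c / j ≤ e j := by
      rw [div_le_iff₀ hjR]
      nlinarith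
    have heδ : e j ≤ δ := by
      have h1 : e j * j ≤ (1 + δ) * c := by
        rw [le_div_iff₀ hjR] at hub
        linarith
      nlinarith
    refine ⟨hlb, hub, h3δ, heδ, ?_, ?_⟩
    · rw [hq_eq j]; linarith
    · rw [hq_eq j]; linarith
  have hsc : ((s:ℝ) - 1) * c = 2 := by
    rw [hc_def, mul_comm]
    exact div_mul_cancel₀ 2 (by linarith)
  -- log bounds per index
  have hlog : ∀ j, k ≤ j → 2 * (1 - δ) * (1 / j) ≤ ((s:ℝ) - 1) * (-Real.log (q j)) ∧
      ((s:ℝ) - 1) * (-Real.log (q j)) ≤ 2 * (1 + δ) / (1 - δ) * (1 / j) := by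
    intro j hjk
    obtain ⟨hlb, hub, h3δ, heδ, hq1, hq2⟩ := hj j hjk
    have hjR : (0:ℝ) < j := by
      have : 1 ≤ j := le_trans hk1 hjk
      exact_mod_cast this
    have hL1 : e j ≤ -Real.log (q j) := by
      have h := Real.log_le_sub_one_of_pos hq2
      have h2 : q j = 1 - e j := hq_eq j
      linarith
    have hL2 : -Real.log (q j) ≤ e j / (1 - δ) := by
      have h := Real.log_le_sub_one_of_pos (inv_pos.2 hq2)
      rw [Real.log_inv] at h
      have hqe : (0:ℝ) < 1 - e j := by rw [← hq_eq j]; exact hq2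
      have hqinv : (q j)⁻¹ - 1 = e j / q j := by
        rw [hq_eq j]
        field_simp
        ring
      rw [hqinv] at h
      have hdiv : e j / q j ≤ e j / (1 - δ) :=
        div_le_div_of_nonneg_left (hbasic j).1.le (by linarith) hq1
      linarith
    have hss : (0:ℝ) ≤ (s:ℝ) - 1 := by linarith
    constructor
    · have h1 : ((s:ℝ) - 1) * ((1 - δ) * c / j) ≤ ((s:ℝ) - 1) * e j :=
        mul_le_mul_of_nonneg_left hlb hss
      have h2 : ((s:ℝ) - 1) * e j ≤ ((s:ℝ) - 1) * (-Real.log (q j)) :=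
        mul_le_mul_of_nonneg_left hL1 hss
      have h3 : ((s:ℝ) - 1) * ((1 - δ) * c / j) = 2 * (1 - δ) * (1 / j) := by
        linear_combination ((1 - δ) / (j:ℝ)) * hsc
      rw [← h3]
      exact le_trans h1 h2
    · have h1 : ((s:ℝ) - 1) * (-Real.log (q j)) ≤ ((s:ℝ) - 1) * (e j / (1 - δ)) :=
        mul_le_mul_of_nonneg_left hL2 hss
      have h2 : e j / (1 - δ) ≤ (1 + δ) * c / j / (1 - δ) :=
        div_le_div_of_nonneg_right hub (by linarith)
      have h3 : ((s:ℝ) - 1) * ((1 + δ) * c / j / (1 - δ)) = 2 * (1 + δ) / (1 - δ) * (1 / j) := by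
        linear_combination ((1 + δ) / (1 - δ) / (j:ℝ)) * hsc
      have h4 : ((s:ℝ) - 1) * (e j / (1 - δ)) ≤ ((s:ℝ) - 1) * ((1 + δ) * c / j / (1 - δ)) :=
        mul_le_mul_of_nonneg_left h2 hss
      rw [← h3]
      exact le_trans h1 h4
  -- positivity facts about k n
  have hkn : k ≤ n := le_of_lt hn
  have hkR : (0:ℝ) < k := by exact_mod_cast hk1
  have hnR : (0:ℝ) < n := by
    have : 1 ≤ n := le_trans hk1 hkn
    exact_mod_cast this
  -- the log of the product
  have hlogP : Real.log (∏ j ∈ Finset.Ico k n, q j ^ (s - 1)) =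
      ∑ j ∈ Finset.Ico k n, ((s:ℝ) - 1) * Real.log (q j) := by
    rw [Real.log_prod]
    · apply Finset.sum_congr rfl
      intro j hjm
      rw [Real.log_pow, Nat.cast_sub (by omega : 1 ≤ s), Nat.cast_one]
    · intro j hjm
      exact pow_ne_zero _ (hj j (Finset.mem_Ico.1 hjm).1).2.2.2.2.2.ne'
  -- sums
  set S : ℝ := ∑ j ∈ Finset.Ico k n, (1 / (j:ℝ)) with hS_def
  have hT_lb : 2 * (1 - δ) * S ≤ -Real.log (∏ j ∈ Finset.Ico k n, q j ^ (s - 1)) := by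
    rw [hlogP, ← Finset.sum_neg_distrib, hS_def, Finset.mul_sum]
    apply Finset.sum_le_sum
    intro j hjm
    have h := (hlog j (Finset.mem_Ico.1 hjm).1).1
    linarith
  have hT_ub : -Real.log (∏ j ∈ Finset.Ico k n, q j ^ (s - 1)) ≤
      2 * (1 + δ) / (1 - δ) * S := by
    rw [hlogP, ← Finset.sum_neg_distrib, hS_def, Finset.mul_sum]
    apply Finset.sum_le_sum
    intro j hjm
    have h := (hlog j (Finset.mem_Ico.1 hjm).1).2
    linarith
  -- telescoping for log(n/k)
  have htel : ∑ j ∈ Finset.Ico k n, (Real.log ((j:ℝ) + 1) - Real.log (j:ℝ)) =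
      Real.log ((n:ℝ) / k) := by
    have h1 : ∀ m : ℕ, ∑ j ∈ Finset.range m, (Real.log ((j:ℝ) + 1) - Real.log (j:ℝ))
        = Real.log (m:ℝ) := by
      intro m
      have h2 := Finset.sum_range_sub (f := fun i : ℕ => Real.log (i:ℝ)) m
      simp only [Nat.cast_zero, Real.log_zero, sub_zero, Nat.cast_add, Nat.cast_one] at h2
      exact h2
    rw [Finset.sum_Ico_eq_sub _ hkn, h1, h1, Real.log_div hnR.ne' hkR.ne']
  -- termwise bounds for the telescoping sum
  have hterm : ∀ j, k ≤ j → (1 - δ) * (1 / j) ≤ Real.log ((j:ℝ) + 1) - Real.log (j:ℝ) ∧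
      Real.log ((j:ℝ) + 1) - Real.log (j:ℝ) ≤ 1 / j := by
    intro j hjk
    have hjR : (0:ℝ) < j := by
      have : 1 ≤ j := le_trans hk1 hjk
      exact_mod_cast this
    have hj1R : (0:ℝ) < (j:ℝ) + 1 := by linarith
    have h3δ : 3 ≤ δ * j := (hj j hjk).2.2.1
    constructor
    · have h := Real.log_le_sub_one_of_pos (div_pos hjR hj1R)
      rw [Real.log_div hjR.ne' hj1R.ne'] at h
      have h2 : (j:ℝ) / ((j:ℝ) + 1) - 1 = -(1 / ((j:ℝ) + 1)) := by
        field_simp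
        ring
      rw [h2] at h
      have h4 : (1 - δ) * (1 / (j:ℝ)) ≤ 1 / ((j:ℝ) + 1) := by
        rw [mul_one_div, div_le_div_iff₀ hjR hj1R]
        nlinarith
      linarith
    · have h := Real.log_le_sub_one_of_pos (div_pos hj1R hjR)
      rw [Real.log_div hj1R.ne' hjR.ne'] at h
      have h2 : ((j:ℝ) + 1) / (j:ℝ) - 1 = 1 / (j:ℝ) := by
        field_simp
        ring
      linarith
  set L : ℝ := Real.log ((n:ℝ) / k) with hL_def
  have hL_ub : L ≤ S := by
    rw [← htel, hS_def]
    apply Finset.sum_le_sum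
    intro j hjm
    exact (hterm j (Finset.mem_Ico.1 hjm).1).2
  have hL_lb : (1 - δ) * S ≤ L := by
    rw [← htel, hS_def, Finset.mul_sum]
    apply Finset.sum_le_sum
    intro j hjm
    exact (hterm j (Finset.mem_Ico.1 hjm).1).1
  have hS_pos : 0 < S := by
    rw [hS_def]
    apply Finset.sum_pos
    · intro j hjm
      have : 1 ≤ j := le_trans hk1 (Finset.mem_Ico.1 hjm).1
      have : (0:ℝ) < j := by exact_mod_cast this
      positivity
    · exact Finset.nonempty_Ico.2 hn
  have hL_pos : 0 < L := by nlinarith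
  -- rewrite the goal
  have hlogkn : Real.log ((k:ℝ) / n) = -L := by
    rw [hL_def, Real.log_div hkR.ne' hnR.ne', Real.log_div hnR.ne' hkR.ne']
    ring
  rw [hlogkn]
  set T : ℝ := -Real.log (∏ j ∈ Finset.Ico k n, q j ^ (s - 1)) with hT_def
  have hgoal_eq : Real.log (∏ j ∈ Finset.Ico k n, q j ^ (s - 1)) / (2 * -L) = T / (2 * L) := by
    rw [hT_def, mul_neg, div_neg, neg_div]
  rw [hgoal_eq]
  -- final bounds
  have hR_lb : 1 - δ ≤ T / (2 * L) := by
    rw [le_div_iff₀ (by linarith : (0:ℝ) < 2 * L)]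
    have h1 : (1 - δ) * (2 * L) ≤ (1 - δ) * (2 * S) := by
      apply mul_le_mul_of_nonneg_left _ (by linarith)
      linarith
    have h2 : 2 * (1 - δ) * S ≤ T := hT_lb
    linarith
  have hR_ub : T / (2 * L) ≤ (1 + δ) / (1 - δ) ^ 2 := by
    rw [div_le_iff₀ (by linarith : (0:ℝ) < 2 * L)]
    have h1 : (1 + δ) / (1 - δ) ^ 2 * (2 * ((1 - δ) * S)) ≤ (1 + δ) / (1 - δ) ^ 2 * (2 * L) := by
      apply mul_le_mul_of_nonneg_left _ (div_nonneg (by linarith) (by positivity))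
      linarith
    have h2 : (1 + δ) / (1 - δ) ^ 2 * (2 * ((1 - δ) * S)) = 2 * (1 + δ) / (1 - δ) * S := by
      have hδne : (1:ℝ) - δ ≠ 0 := by linarith
      field_simp
    linarith
  have hfrac : (1 + δ) / (1 - δ) ^ 2 ≤ 1 + 6 * δ := by
    rw [div_le_iff₀ (by nlinarith : (0:ℝ) < (1 - δ) ^ 2)]
    nlinarith [mul_nonneg (mul_nonneg hδ0.le hδ0.le) hδ0.le,
      mul_le_mul_of_nonneg_left hδ4 (by positivity : (0:ℝ) ≤ 11 * δ)]
  rw [abs_lt]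
  constructor
  · nlinarith
  · nlinarith
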